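/- Let X_1, ..., X_D be independent random vectors, each taking values in R^L and square-integrable, representing D temporal features of sequence length L. Let f be the additive model f = Σ_{j=1}^{D} g_j(X_j) with each g_j(X_j) square-integrable. Fix a time window W ⊆ {1, ..., L} for feature 1, let W̄ = {1, ..., L} \ W, and suppose g_1 decomposes additively over the window as g_1(X_1) = g_W(X_{1,W}) + g_W̄(X_{1,W̄}), where X_{1,W} and X_{1,W̄} denote the restrictions of X_1 to the coordinates in W and W̄ respectively, and g_W(X_{1,W}), g_W̄(X_{1,W̄}) are square-integrable. Let Y be a square-integrable real-valued target, and let X_1' be an independent copy of X_1, independent of (X_1, ..., X_D, Y). Then the expected importance score of the window W for feature 1, namely E[ I(f, X_1, W) ] = E[(Y - (g_W(X'_{1,W}) + g_W̄(X_{1,W̄}) + Σ_{j=2}^{D} g_j(X_j)))^2] - E[(Y - Σ_{j=1}^{D} g_j(X_j))^2], equals 2*[cov(Y, g_W(X_{1,W})) - cov(g_W(X_{1,W}), g_W̄(X_{1,W̄}))]. -/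

import Mathlib

open MeasureTheory ProbabilityTheory Finset
open scoped ENNReal

lemma int_mul_L2 {Ω : Type*} [MeasurableSpace Ω] {μ : Measure Ω} {f g : Ω → ℝ}
    (hf : MemLp f 2 μ) (hg : MemLp g 2 μ) : Integrable (fun ω => f ω * g ω) μ := by
  have h : (1 : ℝ≥0∞) / 1 = 1 / 2 + 1 / 2 := by
    rw [ENNReal.div_add_div_same, one_div_one]
    norm_num
    rw [ENNReal.div_self two_ne_zero ENNReal.ofNat_ne_top]
  have := hg.smul (r := 1) hf
  exact memLp_one_iff_integrable.mp this

lemma cov_eq' {Ω : Type*} [MeasurableSpace Ω] (μ : Measure Ω) [IsProbabilityMeasure μ]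
    (f g : Ω → ℝ) (hf : MemLp f 2 μ) (hg : MemLp g 2 μ) :
    (∫ ω, (f ω - ∫ ω', f ω' ∂μ) * (g ω - ∫ ω', g ω' ∂μ) ∂μ)
      = (∫ ω, f ω * g ω ∂μ) - (∫ ω, f ω ∂μ) * (∫ ω, g ω ∂μ) := by
  have hfi : Integrable f μ := hf.integrable one_le_two
  have hgi : Integrable g μ := hg.integrable one_le_two
  have hfgi : Integrable (fun ω => f ω * g ω) μ := int_mul_L2 hf hg
  set a := ∫ ω, f ω ∂μ
  set b := ∫ ω, g ω ∂μ
  have key : ∀ ω, (f ω - a) * (g ω - b) = f ω * g ω - a * g ω - b * f ω + a * b := by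
    intro ω; ring
  simp_rw [key]
  have h1 : Integrable (fun ω => f ω * g ω - a * g ω) μ := hfgi.sub (hgi.const_mul a)
  have h2 : Integrable (fun ω => f ω * g ω - a * g ω - b * f ω) μ := h1.sub (hfi.const_mul b)
  rw [integral_add h2 (integrable_const _), integral_sub h1 (hfi.const_mul b),
    integral_sub hfgi (hgi.const_mul a), integral_const_mul, integral_const_mul,
    integral_const]
  simp only [probReal_univ, smul_eq_mul, one_mul]
  ring


/-- Covariance of two real-valued random variables w.r.t. a measure `μ`. -/
noncomputable def cov {Ω : Type*} [MeasurableSpace Ω] (μ : Measure Ω) (X Y : Ω → ℝ) : ℝ :=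
  ∫ ω, (X ω - ∫ ω', X ω' ∂μ) * (Y ω - ∫ ω', Y ω' ∂μ) ∂μ

/-- Proposition 1: for an additive model `f = Σ_j g_j (X j)` over independent temporal
features `X j : Ω → (Fin L → ℝ)`, where the feature-0 component decomposes additively as
`g 0 = gW + gWbar` with `gW` depending only on the coordinates in the window `W` and `gWbar`
depending only on the coordinates outside `W`, the expected importance score of the window
`W` (the expected increase in quadratic loss when the in-window part of `X 0` is replaced by
an independent copy) equals
`2 * (cov(Y, gW (X 0)) - cov(gW (X 0), gWbar (X 0)))`. -/
theorem expected_window_importance_score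
    {Ω : Type*} [MeasurableSpace Ω] (μ : Measure Ω) [IsProbabilityMeasure μ]
    (D L : ℕ) [NeZero D]
    (X : Fin D → Ω → (Fin L → ℝ)) (hXmeas : ∀ j, Measurable (X j))
    (hXL2 : ∀ j, MemLp (X j) 2 μ)
    (hXindep : iIndepFun X μ)
    (g : Fin D → (Fin L → ℝ) → ℝ) (hgmeas : ∀ j, Measurable (g j))
    (hgL2 : ∀ j, MemLp (fun ω => g j (X j ω)) 2 μ)
    (W : Finset (Fin L))
    (gW gWbar : (Fin L → ℝ) → ℝ)
    (hgWmeas : Measurable gW) (hgWbarmeas : Measurable gWbar)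
    -- `gW` depends only on the coordinates inside `W`:
    (hgWdep : ∀ x x' : Fin L → ℝ, (∀ k ∈ W, x k = x' k) → gW x = gW x')
    -- `gWbar` depends only on the coordinates outside `W`:
    (hgWbardep : ∀ x x' : Fin L → ℝ, (∀ k ∉ W, x k = x' k) → gWbar x = gWbar x')
    -- additive decomposition of the feature-0 component over the window:
    (hdecomp : ∀ x : Fin L → ℝ, g 0 x = gW x + gWbar x)
    (hgWL2 : MemLp (fun ω => gW (X 0 ω)) 2 μ)
    (hgWbarL2 : MemLp (fun ω => gWbar (X 0 ω)) 2 μ)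
    (Y : Ω → ℝ) (hY : MemLp Y 2 μ)
    (X₁' : Ω → (Fin L → ℝ)) (hX₁'meas : Measurable X₁')
    (hid : IdentDistrib X₁' (X 0) μ μ)
    (hindep : IndepFun X₁' (fun ω => ((fun j => X j ω), Y ω)) μ) :
    (∫ ω, (Y ω - (gW (X₁' ω) + gWbar (X 0 ω) + ∑ j ∈ univ.erase 0, g j (X j ω))) ^ 2 ∂μ)
      - (∫ ω, (Y ω - ∑ j, g j (X j ω)) ^ 2 ∂μ)
      = 2 * (cov μ Y (fun ω => gW (X 0 ω))
          - cov μ (fun ω => gW (X 0 ω)) (fun ω => gWbar (X 0 ω))) := by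
  classical
  set U : Ω → ℝ := fun ω => gW (X 0 ω) with hU_def
  set U' : Ω → ℝ := fun ω => gW (X₁' ω) with hU'_def
  set V : Ω → ℝ := fun ω => gWbar (X 0 ω) with hV_def
  set S : Ω → ℝ := fun ω => ∑ j ∈ univ.erase 0, g j (X j ω) with hS_def
  set A : Ω → ℝ := fun ω => Y ω - V ω - S ω with hA_def
  -- L² facts
  have hUL2 : MemLp U 2 μ := hgWL2
  have hidU : IdentDistrib U' U μ μ := hid.comp hgWmeas
  have hU'L2 : MemLp U' 2 μ := hidU.symm.memLp_snd hUL2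
  have hSL2 : MemLp S 2 μ := by
    have h := memLp_finset_sum' (μ := μ) (p := 2) (univ.erase (0 : Fin D))
      (fun j _ => hgL2 j)
    have heq : (∑ i ∈ univ.erase (0 : Fin D), fun ω => g i (X i ω)) = S := by
      funext ω
      rw [Finset.sum_apply]
    rwa [heq] at h
  have hVL2 : MemLp V 2 μ := hgWbarL2
  have hAL2 : MemLp A 2 μ := (hY.sub hVL2).sub hSL2
  -- rewrite the two integrands
  have hsum : ∀ ω, ∑ j, g j (X j ω) = U ω + V ω + S ω := by
    intro ω
    rw [← Finset.add_sum_erase univ (fun j => g j (X j ω)) (mem_univ 0), hdecomp]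
  have e1 : ∀ ω, Y ω - (U' ω + V ω + S ω) = A ω - U' ω := by
    intro ω; simp only [hA_def]; ring
  have e2 : ∀ ω, Y ω - ∑ j, g j (X j ω) = A ω - U ω := by
    intro ω; rw [hsum]; simp only [hA_def]; ring
  -- expansion of squared differences
  have expand : ∀ B : Ω → ℝ, MemLp B 2 μ →
      ∫ ω, (A ω - B ω) ^ 2 ∂μ
        = ∫ ω, (A ω) ^ 2 ∂μ - 2 * ∫ ω, A ω * B ω ∂μ + ∫ ω, (B ω) ^ 2 ∂μ := by
    intro B hB
    have hA2 : Integrable (fun ω => (A ω) ^ 2) μ := by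
      simpa [sq] using int_mul_L2 hAL2 hAL2
    have hB2 : Integrable (fun ω => (B ω) ^ 2) μ := by
      simpa [sq] using int_mul_L2 hB hB
    have hAB : Integrable (fun ω => A ω * B ω) μ := int_mul_L2 hAL2 hB
    have key : ∀ ω, (A ω - B ω) ^ 2 = (A ω) ^ 2 - 2 * (A ω * B ω) + (B ω) ^ 2 := by
      intro ω; ring
    simp_rw [key]
    have h1 : Integrable (fun ω => (A ω) ^ 2 - 2 * (A ω * B ω)) μ :=
      hA2.sub (hAB.const_mul 2)
    rw [integral_add h1 hB2, integral_sub hA2 (hAB.const_mul 2), integral_const_mul]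
  -- identically distributed facts
  have hU'sq : ∫ ω, (U' ω) ^ 2 ∂μ = ∫ ω, (U ω) ^ 2 ∂μ :=
    (hidU.comp (measurable_id.pow_const 2)).integral_eq
  have hU'int : ∫ ω, U' ω ∂μ = ∫ ω, U ω ∂μ := hidU.integral_eq
  -- independence: E[A U'] = E[A] E[U']
  have hAU' : ∫ ω, A ω * U' ω ∂μ = (∫ ω, A ω ∂μ) * ∫ ω, U' ω ∂μ := by
    set φ : (Fin D → Fin L → ℝ) × ℝ → ℝ :=
      fun p => p.1 0 |> gWbar |> fun v => p.2 - v - ∑ j ∈ univ.erase 0, g j (p.1 j) with hφ_def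
    have hφmeas : Measurable φ := by
      apply Measurable.sub
      · exact (measurable_snd.sub
          (hgWbarmeas.comp ((measurable_pi_apply 0).comp measurable_fst)))
      · exact Finset.measurable_sum _ (fun j _ =>
          (hgmeas j).comp ((measurable_pi_apply j).comp measurable_fst))
    have hIndAU' : IndepFun U' A μ := by
      have := hindep.comp hgWmeas hφmeas
      exact this
    have := hIndAU'.integral_mul_eq_mul_integral hU'L2.aestronglyMeasurable hAL2.aestronglyMeasurable
    simp_rw [Pi.mul_apply, mul_comm (U' _) (A _)] at this
    rw [this, mul_comm]
  -- independence: E[g_j(X_j) U] = E[g_j(X_j)] E[U] for j ≠ 0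
  have hSU : ∫ ω, S ω * U ω ∂μ = (∫ ω, S ω ∂μ) * ∫ ω, U ω ∂μ := by
    have hterm : ∀ j ∈ univ.erase (0 : Fin D),
        ∫ ω, g j (X j ω) * U ω ∂μ = (∫ ω, g j (X j ω) ∂μ) * ∫ ω, U ω ∂μ := by
      intro j hj
      have hne : j ≠ 0 := (Finset.mem_erase.mp hj).1
      have hind : IndepFun (X j) (X 0) μ := hXindep.indepFun hne
      have hind2 : IndepFun (fun ω => g j (X j ω)) U μ :=
        hind.comp (hgmeas j) hgWmeas
      exact hind2.integral_mul_eq_mul_integral ((hgL2 j).aestronglyMeasurable)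
        hUL2.aestronglyMeasurable
    have hSmul : ∀ ω, S ω * U ω = ∑ j ∈ univ.erase (0 : Fin D), g j (X j ω) * U ω := by
      intro ω; simp only [hS_def]; rw [Finset.sum_mul]
    simp_rw [hSmul]
    rw [integral_finset_sum _ (fun j _ => int_mul_L2 (hgL2 j) hUL2)]
    have hSint : ∫ ω, S ω ∂μ = ∑ j ∈ univ.erase (0 : Fin D), ∫ ω, g j (X j ω) ∂μ := by
      simp only [hS_def]
      exact integral_finset_sum _ (fun j _ => (hgL2 j).integrable one_le_two)
    rw [hSint, Finset.sum_mul]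
    exact Finset.sum_congr rfl hterm
  -- E[A U] expansion
  have hAU : ∫ ω, A ω * U ω ∂μ
      = ∫ ω, Y ω * U ω ∂μ - ∫ ω, V ω * U ω ∂μ - (∫ ω, S ω ∂μ) * ∫ ω, U ω ∂μ := by
    have key : ∀ ω, A ω * U ω = Y ω * U ω - V ω * U ω - S ω * U ω := by
      intro ω; simp only [hA_def]; ring
    simp_rw [key]
    have i1 : Integrable (fun ω => Y ω * U ω) μ := int_mul_L2 hY hUL2
    have i2 : Integrable (fun ω => V ω * U ω) μ := int_mul_L2 hVL2 hUL2
    have i12 : Integrable (fun ω => Y ω * U ω - V ω * U ω) μ := i1.sub i2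
    rw [integral_sub i12 (int_mul_L2 hSL2 hUL2), integral_sub i1 i2, hSU]
  have hAint : ∫ ω, A ω ∂μ = ∫ ω, Y ω ∂μ - ∫ ω, V ω ∂μ - ∫ ω, S ω ∂μ := by
    simp only [hA_def]
    have i1 : Integrable Y μ := hY.integrable one_le_two
    have i2 : Integrable V μ := hVL2.integrable one_le_two
    have i12 : Integrable (fun ω => Y ω - V ω) μ := i1.sub i2
    rw [integral_sub i12 (hSL2.integrable one_le_two), integral_sub i1 i2]
  -- covariances
  have hcovYU : cov μ Y U = ∫ ω, Y ω * U ω ∂μ - (∫ ω, Y ω ∂μ) * ∫ ω, U ω ∂μ := by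
    unfold cov; exact cov_eq' μ Y U hY hUL2
  have hcovUV : cov μ U V = ∫ ω, V ω * U ω ∂μ - (∫ ω, V ω ∂μ) * ∫ ω, U ω ∂μ := by
    unfold cov
    rw [cov_eq' μ U V hUL2 hVL2]
    simp_rw [mul_comm (U _) (V _)]
    ring
  -- assemble
  simp_rw [show ∀ ω, Y ω - (gW (X₁' ω) + gWbar (X 0 ω) + ∑ j ∈ univ.erase 0, g j (X j ω)) = A ω - U' ω from e1, e2]
  rw [expand U' hU'L2, expand U hUL2, hU'sq, hAU', hU'int, hAU, hAint, hcovYU, hcovUV]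
  ring
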